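/- Let R be an n×n nonnegative matrix with ‖R‖₁ ≤ 1, and let R⃗ = R₁R₂⋯R_n be the scan matrix formed from R (R_j is the identity with column j replaced by column j of R). Then λ(R⃗) ≤ λ(R) and ‖R⃗‖₁ ≤ ‖R‖₁. -/

import Mathlib

open Matrix

/-- The spectral radius of a real square matrix: the supremum of the absolute
values of its (complex) eigenvalues, i.e. of the roots of its characteristic
polynomial over `ℂ`. -/
noncomputable def specRad {n : ℕ} (R : Matrix (Fin n) (Fin n) ℝ) : ℝ :=
  sSup {r : ℝ | ∃ μ : ℂ, ((R.map (fun a => (a : ℂ))).charpoly).IsRoot μ ∧ r = ‖μ‖}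

/-- The maximum absolute column sum norm `‖·‖₁`. -/
noncomputable def norm1 {m n : ℕ} (B : Matrix (Fin m) (Fin n) ℝ) : ℝ :=
  ⨆ j, ∑ i, |B i j|

/-- The maximum absolute row sum norm `‖·‖_∞`. -/
noncomputable def normInf {m n : ℕ} (B : Matrix (Fin m) (Fin n) ℝ) : ℝ :=
  ⨆ i, ∑ j, |B i j|

/-- `colMat R j` is the identity matrix with column `j` replaced by column `j`
of `R`. -/
def colMat {n : ℕ} (R : Matrix (Fin n) (Fin n) ℝ) (j : Fin n) :
    Matrix (Fin n) (Fin n) ℝ :=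
  Matrix.of fun i k => if k = j then R i j else if i = k then 1 else 0

/-- The scan matrix `R⃗ = R₁ R₂ ⋯ Rₙ`. -/
def scanMat {n : ℕ} (R : Matrix (Fin n) (Fin n) ℝ) : Matrix (Fin n) (Fin n) ℝ :=
  ((List.finRange n).map (colMat R)).prod

open Polynomial Finset

namespace ScanAux

variable {n : ℕ}

lemma eval_charpoly (A : Matrix (Fin n) (Fin n) ℂ) (μ : ℂ) :
    A.charpoly.eval μ = (μ • (1 : Matrix (Fin n) (Fin n) ℂ) - A).det := by
  rw [Matrix.charpoly, ← Polynomial.coe_evalRingHom, RingHom.map_det]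
  congr 1
  ext i j
  by_cases h : i = j
  · subst h
    simp [Matrix.charmatrix_apply_eq, Matrix.one_apply]
  · simp [Matrix.charmatrix_apply_ne _ _ _ h, Matrix.one_apply, h]

/-- Core eigenvalue estimate: each charpoly root has modulus at most `t` when
there is a positive weight vector `w` with `wᵀ A ≤ t wᵀ`. -/
lemma root_le (A : Matrix (Fin n) (Fin n) ℝ) (hA : ∀ i j, 0 ≤ A i j)
    (w : Fin n → ℝ) (hw : ∀ i, 0 < w i) (t : ℝ)
    (hcol : ∀ k, ∑ i, w i * A i k ≤ t * w k) :
    ∀ r ∈ {r : ℝ | ∃ μ : ℂ, ((A.map (fun a => (a : ℂ))).charpoly).IsRoot μ ∧ r = ‖μ‖},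
      r ≤ t := by
  rintro r ⟨μ, hroot, rfl⟩
  set A' := A.map (fun a => (a : ℂ)) with hA'
  have hdet : (μ • (1 : Matrix (Fin n) (Fin n) ℂ) - A').det = 0 := by
    rw [← eval_charpoly]; exact hroot
  obtain ⟨x, hx0, hx⟩ := (Matrix.exists_mulVec_eq_zero_iff).2 hdet
  have hAx : A' *ᵥ x = μ • x := by
    rw [Matrix.sub_mulVec, sub_eq_zero] at hx
    rw [← hx, Matrix.smul_mulVec, Matrix.one_mulVec]
  set s := ∑ i, w i * ‖x i‖ with hs
  have hspos : 0 < s := by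
    obtain ⟨i0, hi0⟩ : ∃ i, x i ≠ 0 := by
      by_contra h
      push_neg at h
      exact hx0 (funext h)
    apply Finset.sum_pos'
    · intro i _
      exact mul_nonneg (hw i).le (norm_nonneg _)
    · exact ⟨i0, Finset.mem_univ _, mul_pos (hw i0) (norm_pos_iff.mpr hi0)⟩
  have key : ‖μ‖ * s ≤ t * s := by
    calc ‖μ‖ * s = ∑ i, w i * ‖μ * x i‖ := by
          rw [Finset.mul_sum]
          congr 1; ext i
          rw [norm_mul]; ring
      _ = ∑ i, w i * ‖(A' *ᵥ x) i‖ := by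
          congr 1; ext i
          rw [hAx]; simp [Pi.smul_apply, smul_eq_mul]
      _ ≤ ∑ i, w i * ∑ k, A i k * ‖x k‖ := by
          apply Finset.sum_le_sum
          intro i _
          apply mul_le_mul_of_nonneg_left _ (hw i).le
          rw [Matrix.mulVec, dotProduct]
          refine (norm_sum_le _ _).trans ?_
          apply Finset.sum_le_sum
          intro k _
          rw [norm_mul]
          simp [hA', Matrix.map_apply, Complex.norm_real, Real.norm_eq_abs, abs_of_nonneg (hA i k)]
      _ = ∑ k, (∑ i, w i * A i k) * ‖x k‖ := by
          simp only [Finset.mul_sum, Finset.sum_mul]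
          rw [Finset.sum_comm]
          congr 1; ext i; congr 1; ext k
          ring
      _ ≤ ∑ k, (t * w k) * ‖x k‖ := by
          apply Finset.sum_le_sum
          intro k _
          exact mul_le_mul_of_nonneg_right (hcol k) (by positivity)
      _ = t * s := by
          rw [hs, Finset.mul_sum]
          congr 1; ext k; ring
  exact le_of_mul_le_mul_right key hspos

lemma specRad_le (A : Matrix (Fin n) (Fin n) ℝ) (hA : ∀ i j, 0 ≤ A i j)
    (w : Fin n → ℝ) (hw : ∀ i, 0 < w i) (t : ℝ) (ht : 0 ≤ t)
    (hcol : ∀ k, ∑ i, w i * A i k ≤ t * w k) : specRad A ≤ t :=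
  Real.sSup_le (root_le A hA w hw t hcol) ht

lemma specRad_nonneg (A : Matrix (Fin n) (Fin n) ℝ) : 0 ≤ specRad A :=
  Real.sSup_nonneg (by rintro r ⟨μ, _, rfl⟩; positivity)

lemma norm1_nonneg {m : ℕ} (B : Matrix (Fin m) (Fin n) ℝ) : 0 ≤ norm1 B :=
  Real.iSup_nonneg fun j => Finset.sum_nonneg fun i _ => abs_nonneg _

lemma colsum_le_norm1 {m : ℕ} (B : Matrix (Fin m) (Fin n) ℝ) (j : Fin n) :
    ∑ i, |B i j| ≤ norm1 B := by
  unfold norm1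
  exact le_ciSup (f := fun j => ∑ i, |B i j|) (Set.Finite.bddAbove (Set.finite_range _)) j

lemma specRad_le_norm1 (A : Matrix (Fin n) (Fin n) ℝ) (hA : ∀ i j, 0 ≤ A i j) :
    specRad A ≤ norm1 A := by
  apply specRad_le A hA (fun _ => 1) (fun _ => one_pos) _ (norm1_nonneg A)
  intro k
  simpa [abs_of_nonneg (hA _ k)] using colsum_le_norm1 A k

lemma bddAbove_roots (A : Matrix (Fin n) (Fin n) ℝ) (hA : ∀ i j, 0 ≤ A i j) :
    BddAbove {r : ℝ | ∃ μ : ℂ, ((A.map (fun a => (a : ℂ))).charpoly).IsRoot μ ∧ r = ‖μ‖} := by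
  refine ⟨norm1 A, ?_⟩
  intro r hr
  refine root_le A hA (fun _ => 1) (fun _ => one_pos) _ ?_ r hr
  intro k
  simpa [abs_of_nonneg (hA _ k)] using colsum_le_norm1 A k


variable {R : Matrix (Fin n) (Fin n) ℝ}

lemma colMat_nonneg (hR : ∀ i j, 0 ≤ R i j) (j : Fin n) (i k : Fin n) :
    0 ≤ colMat R j i k := by
  unfold colMat
  dsimp only [Matrix.of_apply]
  split
  · exact hR i j
  · split <;> norm_num

lemma prod_nonneg (hR : ∀ i j, 0 ≤ R i j) :
    ∀ (l : List (Fin n)) (i k : Fin n), 0 ≤ ((l.map (colMat R)).prod) i k := by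
  intro l
  induction l with
  | nil => intro i k; simp [Matrix.one_apply]; split <;> norm_num
  | cons j l ih =>
    intro i k
    rw [List.map_cons, List.prod_cons, Matrix.mul_apply]
    exact Finset.sum_nonneg fun m _ => mul_nonneg (colMat_nonneg hR j i m) (ih m k)

lemma prod_fix (k : Fin n) :
    ∀ (l : List (Fin n)), k ∉ l → ∀ i, ((l.map (colMat R)).prod) i k = if i = k then 1 else 0 := by
  intro l
  induction l with
  | nil => intro _ i; simp [Matrix.one_apply]
  | cons j l ih =>
    intro hk i
    have hkj : k ≠ j := fun h => hk (h ▸ List.mem_cons_self (a := j) (l := l))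
    have hkl : k ∉ l := fun h => hk (List.mem_cons_of_mem j h)
    rw [List.map_cons, List.prod_cons, Matrix.mul_apply]
    have : ∀ m, colMat R j i m * ((l.map (colMat R)).prod) m k
        = if m = k then colMat R j i k else 0 := by
      intro m
      rw [ih hkl m]
      by_cases h : m = k <;> simp [h]
    simp only [this]
    rw [Finset.sum_ite_eq' univ k _]
    simp only [Finset.mem_univ, if_true]
    unfold colMat
    simp [hkj]

/-- Key weighted column-sum estimate for partial scan products. -/
lemma prod_weighted (hR : ∀ i j, 0 ≤ R i j) (w b : Fin n → ℝ)
    (hw : ∀ i, 0 ≤ w i) (hwb : ∀ j, ∑ i, w i * R i j ≤ b j) (hbw : ∀ j, b j ≤ w j) :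
    ∀ (l : List (Fin n)) (k : Fin n),
      ∑ i, w i * ((l.map (colMat R)).prod) i k ≤ if k ∈ l then b k else w k := by
  intro l
  induction l with
  | nil =>
    intro k
    simp only [List.map_nil, List.prod_nil, List.not_mem_nil, if_false]
    simp [Matrix.one_apply, Finset.sum_ite_eq' univ k]
  | cons j l ih =>
    intro k
    rw [List.map_cons, List.prod_cons]
    set Q := (l.map (colMat R)).prod with hQ
    have swap : ∑ i, w i * (colMat R j * Q) i k
        = ∑ m, (∑ i, w i * colMat R j i m) * Q m k := by
      simp only [Matrix.mul_apply, Finset.mul_sum, Finset.sum_mul]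
      rw [Finset.sum_comm]
      congr 1; ext i; congr 1; ext m; ring
    rw [swap]
    have hu : ∀ m, (∑ i, w i * colMat R j i m) = if m = j then ∑ i, w i * R i j else w m := by
      intro m
      by_cases h : m = j
      · subst h
        simp only [if_pos rfl]
        congr 1; ext i
        unfold colMat; simp
      · simp only [if_neg h]
        unfold colMat
        have : ∀ i, w i * (Matrix.of fun i k => if k = j then R i j else if i = k then 1 else 0) i m
            = if i = m then w i else 0 := by
          intro i
          simp only [Matrix.of_apply, if_neg h]
          by_cases h2 : i = m <;> simp [h2]
        simp only [this]
        rw [Finset.sum_ite_eq' univ m]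
        simp
    by_cases hkl : k ∈ l
    · -- use IH and u ≤ w
      have hle : ∑ m, (∑ i, w i * colMat R j i m) * Q m k ≤ ∑ m, w m * Q m k := by
        apply Finset.sum_le_sum
        intro m _
        apply mul_le_mul_of_nonneg_right _ (prod_nonneg hR l m k)
        rw [hu m]
        by_cases h : m = j
        · subst h; rw [if_pos rfl]; exact (hwb m).trans (hbw m)
        · rw [if_neg h]
      rw [if_pos (List.mem_cons_of_mem j hkl)]
      exact hle.trans ((ih k).trans_eq (by rw [if_pos hkl]))
    · by_cases hkj : k = j
      · -- column k of Q is e_k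
        subst hkj
        have : ∀ m, (∑ i, w i * colMat R k i m) * Q m k
            = if m = k then (∑ i, w i * colMat R k i m) else 0 := by
          intro m
          rw [hQ, prod_fix k l hkl m]
          by_cases h : m = k <;> simp [h]
        simp only [this]
        rw [Finset.sum_ite_eq' univ k]
        simp only [Finset.mem_univ, if_true]
        rw [hu k, if_pos rfl, if_pos (List.mem_cons_self (a := k) (l := l))]
        exact hwb k
      · have hfix : ∀ m, (∑ i, w i * colMat R j i m) * Q m k
            = if m = k then (∑ i, w i * colMat R j i m) else 0 := by
          intro m
          rw [hQ, prod_fix k l hkl m]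
          by_cases h : m = k <;> simp [h]
        simp only [hfix]
        rw [Finset.sum_ite_eq' univ k]
        simp only [Finset.mem_univ, if_true]
        rw [hu k, if_neg hkj, if_neg (by simp [hkj, hkl])]


lemma claimB (R : Matrix (Fin n) (Fin n) ℝ) (hR : ∀ i j, 0 ≤ R i j)
    (s : ℝ) (hs : 0 < s) (v : Fin n → ℝ)
    (hv : ∀ i, s * v i - (∑ k, R k i * v k) = 1) (hnn : ∀ i, 0 ≤ v i) :
    ∀ i, 0 < v i := by
  intro i
  have hsum : 0 ≤ ∑ k, R k i * v k :=
    Finset.sum_nonneg fun k _ => mul_nonneg (hR k i) (hnn k)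
  nlinarith [hv i, hnn i]

-- Claim A: solutions are positive when s ≥ 1
lemma claimA (R : Matrix (Fin n) (Fin n) ℝ) (hR : ∀ i j, 0 ≤ R i j)
    (hc : ∀ j, ∑ i, R i j ≤ 1) (s : ℝ) (hs : 1 ≤ s) (v : Fin n → ℝ)
    (hv : ∀ i, s * v i - (∑ k, R k i * v k) = 1) :
    ∀ i, 0 < v i := by
  have hnn : ∀ i, 0 ≤ v i := by
    by_contra h
    push_neg at h
    obtain ⟨i0, hi0⟩ := h
    obtain ⟨m, _, hm⟩ := Finset.exists_min_image univ v ⟨i0, Finset.mem_univ i0⟩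
    have hm0 : v m < 0 := lt_of_le_of_lt (hm i0 (Finset.mem_univ i0)) hi0
    have h2 : (∑ k, R k m * v m) ≤ ∑ k, R k m * v k :=
      Finset.sum_le_sum fun k _ => mul_le_mul_of_nonneg_left (hm k (Finset.mem_univ k)) (hR k m)
    have h3 : (∑ k, R k m * v m) = (∑ k, R k m) * v m := by rw [Finset.sum_mul]
    have h4 : (1:ℝ) * v m ≤ (∑ k, R k m) * v m :=
      mul_le_mul_of_nonpos_right (hc m) hm0.le
    have h5 : s * v m ≤ 1 * v m := mul_le_mul_of_nonpos_right hs hm0.le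
    linarith [hv m]
  exact claimB R hR s (lt_of_lt_of_le one_pos hs) v hv hnn


noncomputable def MM (R : Matrix (Fin n) (Fin n) ℝ) (s : ℝ) : Matrix (Fin n) (Fin n) ℝ :=
  s • (1 : Matrix (Fin n) (Fin n) ℝ) - Rᵀ

noncomputable def ww (R : Matrix (Fin n) (Fin n) ℝ) (s : ℝ) : Fin n → ℝ :=
  (MM R s)⁻¹ *ᵥ (fun _ => (1:ℝ))

lemma ww_eq (R : Matrix (Fin n) (Fin n) ℝ) (s : ℝ) (hs : (MM R s).det ≠ 0) :
    ∀ i, s * ww R s i - (∑ k, R k i * ww R s k) = 1 := by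
  intro i
  have h1 : MM R s *ᵥ ww R s = (fun _ => 1) := by
    rw [ww, Matrix.mulVec_mulVec, Matrix.mul_nonsing_inv _ (isUnit_iff_ne_zero.mpr hs),
      Matrix.one_mulVec]
  have h2 := congrFun h1 i
  rw [Matrix.mulVec, dotProduct] at h2
  have h3 : ∀ k, (MM R s) i k * ww R s k
      = (if k = i then s * ww R s k else 0) - R k i * ww R s k := by
    intro k
    rw [MM]
    by_cases h : k = i
    · subst h; simp [Matrix.sub_apply, Matrix.one_apply, Matrix.transpose_apply]; ring
    · simp [Matrix.sub_apply, Matrix.one_apply, Matrix.transpose_apply, Ne.symm h, h]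
  rw [Finset.sum_congr rfl (fun k _ => h3 k), Finset.sum_sub_distrib,
    Finset.sum_ite_eq' univ i] at h2
  simpa using h2

lemma ww_continuousOn (R : Matrix (Fin n) (Fin n) ℝ) (U : Set ℝ)
    (hU : ∀ s ∈ U, (MM R s).det ≠ 0) (i : Fin n) :
    ContinuousOn (fun s => ww R s i) U := by
  have hM : Continuous (MM R) := by
    apply Continuous.sub
    · exact continuous_id.smul continuous_const
    · exact continuous_const
  have hdet : Continuous fun s => (MM R s).det := hM.matrix_det
  have hadj : Continuous fun s => ∑ k, (MM R s).adjugate i k := by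
    apply continuous_finset_sum
    intro k _
    exact (continuous_apply k).comp ((continuous_apply i).comp hM.matrix_adjugate)
  have key : ∀ s ∈ U, ww R s i = ((MM R s).det)⁻¹ * ∑ k, (MM R s).adjugate i k := by
    intro s _
    rw [ww, Matrix.inv_def, Ring.inverse_eq_inv, Matrix.smul_mulVec]
    simp [Matrix.mulVec, dotProduct]
  apply ContinuousOn.congr _ key
  exact (hdet.continuousOn.inv₀ hU).mul hadj.continuousOn


lemma det_ne (R : Matrix (Fin n) (Fin n) ℝ) (hR : ∀ i j, 0 ≤ R i j) (s : ℝ)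
    (hs : specRad R < s) : (MM R s).det ≠ 0 := by
  intro h0
  have hρ0 : 0 ≤ specRad R := specRad_nonneg R
  have h1 : (s • (1 : Matrix (Fin n) (Fin n) ℝ) - R).det = 0 := by
    have hT : MM R s = (s • (1 : Matrix (Fin n) (Fin n) ℝ) - R)ᵀ := by
      rw [MM, Matrix.transpose_sub, Matrix.transpose_smul, Matrix.transpose_one]
    rw [← Matrix.det_transpose (s • 1 - R), ← hT]
    exact h0
  have h2 : ((s:ℂ) • (1 : Matrix (Fin n) (Fin n) ℂ) - R.map (fun a => (a:ℂ))).det = 0 := by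
    have hmap : ((s • (1 : Matrix (Fin n) (Fin n) ℝ) - R).map (fun a => (a:ℂ)))
        = (s:ℂ) • (1 : Matrix (Fin n) (Fin n) ℂ) - R.map (fun a => (a:ℂ)) := by
      ext i k
      by_cases h : i = k <;>
        simp [Matrix.map_apply, Matrix.one_apply, Matrix.sub_apply, Matrix.smul_apply, h]
    rw [← hmap]
    show (Complex.ofRealHom.mapMatrix (s • (1 : Matrix (Fin n) (Fin n) ℝ) - R)).det = 0
    rw [← RingHom.map_det, h1]
    simp
  have hroot : ((R.map (fun a => (a:ℂ))).charpoly).IsRoot (s:ℂ) := by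
    rw [Polynomial.IsRoot, eval_charpoly]; exact h2
  have hmem : s ∈ {r : ℝ | ∃ μ : ℂ, ((R.map (fun a => (a : ℂ))).charpoly).IsRoot μ
      ∧ r = ‖μ‖} :=
    ⟨(s:ℂ), hroot, by rw [Complex.norm_real, Real.norm_eq_abs, abs_of_nonneg (hρ0.trans hs.le)]⟩
  exact absurd (le_csSup (bddAbove_roots R hR) hmem) (not_le.mpr hs)


lemma exists_pos_weights (R : Matrix (Fin n) (Fin n) ℝ) (hR : ∀ i j, 0 ≤ R i j)
    (hc : ∀ j, ∑ i, R i j ≤ 1) (t : ℝ) (hρt : specRad R < t) (ht1 : t < 1) :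
    ∃ w : Fin n → ℝ, (∀ i, 0 < w i) ∧ ∀ k, ∑ i, w i * R i k ≤ t * w k := by
  have hρ0 := specRad_nonneg R
  have ht0 : 0 < t := lt_of_le_of_lt hρ0 hρt
  refine ⟨ww R t, ?_, ?_⟩
  · -- positivity of ww R t via IVT argument
    by_contra hcon
    push_neg at hcon
    obtain ⟨i1, hi1⟩ := hcon
    set B := {s ∈ Set.Icc t 1 | ∃ i, ww R s i ≤ 0} with hB
    have hsub : Set.Icc t 1 ⊆ Set.Ioi (specRad R) := fun s hs => lt_of_lt_of_le hρt hs.1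
    have hdetU : ∀ s ∈ Set.Ioi (specRad R), (MM R s).det ≠ 0 := fun s hs => det_ne R hR s hs
    have hwc : ∀ i, ContinuousOn (fun s => ww R s i) (Set.Icc t 1) :=
      fun i => (ww_continuousOn R _ hdetU i).mono hsub
    have hBclosed : IsClosed B := by
      have hBu : B = ⋃ i, (Set.Icc t 1 ∩ (fun s => ww R s i) ⁻¹' Set.Iic 0) := by
        ext s
        simp only [hB, Set.mem_setOf_eq, Set.mem_iUnion, Set.mem_inter_iff, Set.mem_preimage,
          Set.mem_Iic, Set.mem_sep_iff]
        tauto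
      rw [hBu]
      exact isClosed_iUnion_of_finite fun i =>
        (hwc i).preimage_isClosed_of_isClosed isClosed_Icc isClosed_Iic
    have hBcomp : IsCompact B :=
      IsCompact.of_isClosed_subset isCompact_Icc hBclosed (fun s hs => hs.1)
    have hBne : B.Nonempty := ⟨t, ⟨⟨le_refl t, ht1.le⟩, i1, hi1⟩⟩
    obtain ⟨⟨hts, hs1⟩, i0, hi0⟩ := hBcomp.sSup_mem hBne
    set s0 := sSup B with hs0
    have hρs0 : specRad R < s0 := lt_of_lt_of_le hρt hts
    have hdet0 : (MM R s0).det ≠ 0 := det_ne R hR s0 hρs0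
    rcases eq_or_lt_of_le hs1 with heq1 | hlt1
    · have := claimA R hR hc s0 (by rw [heq1]) (ww R s0) (ww_eq R s0 hdet0) i0
      linarith
    · have hpos : ∀ s ∈ Set.Ioc s0 1, ∀ i, 0 < ww R s i := by
        intro s hs i
        by_contra h
        rw [not_lt] at h
        have hmem : s ∈ B := ⟨⟨hts.trans hs.1.le, hs.2⟩, i, h⟩
        exact absurd (le_csSup hBcomp.bddAbove hmem) (not_le.mpr hs.1)
      have hge : ∀ i, 0 ≤ ww R s0 i := by
        intro i
        have hct : ContinuousWithinAt (fun s => ww R s i) (Set.Ioc s0 1) s0 :=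
          ((hwc i) s0 ⟨hts, hs1⟩).mono (fun s hs => ⟨hts.trans hs.1.le, hs.2⟩)
        haveI : (nhdsWithin s0 (Set.Ioc s0 1)).NeBot := by
          rw [nhdsWithin_Ioc_eq_nhdsGT hlt1]; infer_instance
        refine ge_of_tendsto hct ?_
        filter_upwards [self_mem_nhdsWithin] with s hs
        exact (hpos s hs i).le
      have := claimB R hR s0 (lt_of_le_of_lt hρ0 hρs0) (ww R s0) (ww_eq R s0 hdet0) hge i0
      linarith
  · intro k
    have heqk := ww_eq R t (det_ne R hR t hρt) k
    have hcomm : ∑ i, ww R t i * R i k = ∑ i, R i k * ww R t i := by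
      congr 1; ext i; ring
    rw [hcomm]
    linarith


end ScanAux

lemma scanMat_eq {n : ℕ} (R : Matrix (Fin n) (Fin n) ℝ) :
    scanMat R = ((List.finRange n).map (colMat R)).prod := rfl

/-- If `R` is nonnegative with `‖R‖₁ ≤ 1` then the scan matrix `R⃗` satisfies
`λ(R⃗) ≤ λ(R)` and `‖R⃗‖₁ ≤ ‖R‖₁`. -/
theorem scanMat_specRad_norm1_le {n : ℕ} (R : Matrix (Fin n) (Fin n) ℝ)
    (hR : ∀ i j, 0 ≤ R i j) (hR1 : norm1 R ≤ 1) :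
    specRad (scanMat R) ≤ specRad R ∧ norm1 (scanMat R) ≤ norm1 R := by
  have hcolsum : ∀ j, ∑ i, R i j ≤ 1 := by
    intro j
    calc ∑ i, R i j = ∑ i, |R i j| := by
          apply Finset.sum_congr rfl
          intro i _
          rw [abs_of_nonneg (hR i j)]
      _ ≤ norm1 R := ScanAux.colsum_le_norm1 R j
      _ ≤ 1 := hR1
  have hscan_nonneg : ∀ i k, 0 ≤ scanMat R i k := by
    intro i k
    rw [scanMat_eq]
    exact ScanAux.prod_nonneg hR _ i k
  have hcol_scan : ∀ k, ∑ i, scanMat R i k ≤ ∑ i, R i k := by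
    intro k
    have h := ScanAux.prod_weighted hR (fun _ => 1) (fun j => ∑ i, R i j)
      (fun _ => zero_le_one) (fun j => by simp) hcolsum (List.finRange n) k
    rw [if_pos (List.mem_finRange k)] at h
    rw [scanMat_eq]
    simpa using h
  have hnorm : norm1 (scanMat R) ≤ norm1 R := by
    rcases Nat.eq_zero_or_pos n with h0 | hn
    · subst h0
      unfold norm1
      rw [Real.iSup_of_isEmpty, Real.iSup_of_isEmpty]
    · haveI : Nonempty (Fin n) := ⟨⟨0, hn⟩⟩
      show (⨆ j, ∑ i, |scanMat R i j|) ≤ norm1 R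
      apply ciSup_le
      intro j
      calc ∑ i, |scanMat R i j| = ∑ i, scanMat R i j := by
            apply Finset.sum_congr rfl
            intro i _
            rw [abs_of_nonneg (hscan_nonneg i j)]
        _ ≤ ∑ i, R i j := hcol_scan j
        _ = ∑ i, |R i j| := by
            apply Finset.sum_congr rfl
            intro i _
            rw [abs_of_nonneg (hR i j)]
        _ ≤ norm1 R := ScanAux.colsum_le_norm1 R j
  refine ⟨?_, hnorm⟩
  have hσ_le : specRad (scanMat R) ≤ norm1 (scanMat R) :=
    ScanAux.specRad_le_norm1 _ hscan_nonneg
  have hρ0 := ScanAux.specRad_nonneg R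
  rcases le_or_gt 1 (specRad R) with hρ1 | hρ1
  · exact le_trans hσ_le (le_trans hnorm (le_trans hR1 hρ1))
  · by_contra hcontra
    push_neg at hcontra
    have hσ1 : specRad (scanMat R) ≤ 1 := hσ_le.trans (hnorm.trans hR1)
    set σ := specRad (scanMat R) with hσdef
    set tt := (specRad R + min σ 1) / 2 with httdef
    have h1 : specRad R < min σ 1 := lt_min hcontra hρ1
    have htρ : specRad R < tt := by rw [httdef]; linarith
    have htσ : tt < σ := by
      have h2 : min σ 1 ≤ σ := min_le_left _ _
      rw [httdef]; linarith
    have ht1 : tt < 1 := by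
      have h2 : min σ 1 ≤ 1 := min_le_right _ _
      rw [httdef]; linarith
    obtain ⟨w, hwpos, hwR⟩ := ScanAux.exists_pos_weights R hR hcolsum tt htρ ht1
    have hbw : ∀ j, tt * w j ≤ w j := fun j =>
      mul_le_of_le_one_left (hwpos j).le ht1.le
    have hcol : ∀ k, ∑ i, w i * scanMat R i k ≤ tt * w k := by
      intro k
      have h := ScanAux.prod_weighted hR w (fun k => tt * w k)
        (fun i => (hwpos i).le) hwR hbw (List.finRange n) k
      rw [if_pos (List.mem_finRange k)] at h
      rw [scanMat_eq]
      exact h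
    have hfin : σ ≤ tt := ScanAux.specRad_le _ hscan_nonneg w hwpos tt
      (le_of_lt (lt_of_le_of_lt hρ0 htρ)) hcol
    linarith
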